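/- Let v : ℝⁿ → ℝⁿ be a continuously differentiable steady velocity field, let x : [t₀, t_N] → ℝⁿ satisfy ẋ(t) = v(x(t)), and assume t ↦ Dv(x(t)) is continuous and bounded in operator norm on [t₀, t_N]. If ξ : [t₀, t_N] → ℝⁿ solves the equation of variations ξ̇(t) = Dv(x(t)) ξ(t) with initial condition ξ(t₀) = v(x(t₀)), then ξ(t) = v(x(t)) for all t ∈ [t₀, t_N]. Consequently, if v(x(t₀)) ≠ 0 and v(x(t_N)) ≠ 0, the averaged stretching exponent of this material tangent vector equals the trajectory stretching exponent: (1/(t_N − t₀)) log(‖ξ(t_N)‖/‖ξ(t₀)‖) = (1/(t_N − t₀)) log(‖ẋ(t_N)‖/‖ẋ(t₀)‖). -/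

import Mathlib

/-- In a steady C¹ flow, the solution of the equation of variations
with initial condition ξ(t₀) = v(x(t₀)) coincides with the Lagrangian velocity
along the trajectory, and hence the averaged stretching exponent of this material
vector equals the trajectory stretching exponent (TSE). -/
theorem stmt12 (n : ℕ)
    (v : EuclideanSpace ℝ (Fin n) → EuclideanSpace ℝ (Fin n))
    (hv : ContDiff ℝ 1 v)
    (t₀ tN : ℝ) (ht : t₀ < tN)
    (x : ℝ → EuclideanSpace ℝ (Fin n))
    (hx : ∀ t ∈ Set.Icc t₀ tN, HasDerivAt x (v (x t)) t)
    (hcont : ContinuousOn (fun t => fderiv ℝ v (x t)) (Set.Icc t₀ tN))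
    (hbdd : ∃ M : ℝ, ∀ t ∈ Set.Icc t₀ tN, ‖fderiv ℝ v (x t)‖ ≤ M)
    (ξ : ℝ → EuclideanSpace ℝ (Fin n))
    (hξ : ∀ t ∈ Set.Icc t₀ tN, HasDerivAt ξ ((fderiv ℝ v (x t)) (ξ t)) t)
    (hξ0 : ξ t₀ = v (x t₀)) :
    (∀ t ∈ Set.Icc t₀ tN, ξ t = v (x t)) ∧
    (v (x t₀) ≠ 0 → v (x tN) ≠ 0 →
      (1 / (tN - t₀)) * Real.log (‖ξ tN‖ / ‖ξ t₀‖)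
        = (1 / (tN - t₀)) * Real.log (‖deriv x tN‖ / ‖deriv x t₀‖)) := by
  obtain ⟨M, hM⟩ := hbdd
  set w : ℝ → EuclideanSpace ℝ (Fin n) → EuclideanSpace ℝ (Fin n) :=
    fun t y => if t ∈ Set.Icc t₀ tN then fderiv ℝ v (x t) y else 0 with hw
  have hK : ∀ t, LipschitzWith (Real.toNNReal M) (w t) := by
    intro t
    by_cases htI : t ∈ Set.Icc t₀ tN
    · simp only [hw, htI, if_true]
      exact ((fderiv ℝ v (x t)).lipschitz).weaken (by
        rw [← NNReal.coe_le_coe, coe_nnnorm, Real.coe_toNNReal']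
        exact le_max_of_le_left (hM t htI))
    · simp only [hw, htI, if_false]
      exact LipschitzWith.const' 0
  have hvd : Differentiable ℝ v := hv.differentiable one_ne_zero
  have hg' : ∀ t ∈ Set.Icc t₀ tN,
      HasDerivAt (fun t => v (x t)) ((fderiv ℝ v (x t)) (v (x t))) t := by
    intro t htI
    exact (hvd (x t)).hasFDerivAt.comp_hasDerivAt t (hx t htI)
  have heq : Set.EqOn ξ (fun t => v (x t)) (Set.Icc t₀ tN) := by
    apply ODE_solution_unique_of_mem_Icc_right (v := w)
      (s := fun _ => (Set.univ : Set (EuclideanSpace ℝ (Fin n)))) (fun t _ => (hK t).lipschitzOnWith)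
    · exact fun t htI => (hξ t htI).continuousAt.continuousWithinAt
    · intro t htI
      have htI' : t ∈ Set.Icc t₀ tN := Set.Ico_subset_Icc_self htI
      have := (hξ t htI').hasDerivWithinAt (s := Set.Ici t)
      simpa [hw, htI'.1, htI'.2] using this
    · exact fun t _ => Set.mem_univ _
    · exact fun t htI => (hg' t htI).continuousAt.continuousWithinAt
    · intro t htI
      have htI' : t ∈ Set.Icc t₀ tN := Set.Ico_subset_Icc_self htI
      have := (hg' t htI').hasDerivWithinAt (s := Set.Ici t)
      simpa [hw, htI'.1, htI'.2] using this
    · exact fun t _ => Set.mem_univ _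
    · exact hξ0
  refine ⟨heq, fun h0 hN => ?_⟩
  have hd0 : deriv x t₀ = v (x t₀) := (hx t₀ ⟨le_refl _, ht.le⟩).deriv
  have hdN : deriv x tN = v (x tN) := (hx tN ⟨ht.le, le_refl _⟩).deriv
  rw [hd0, hdN, hξ0, heq ⟨ht.le, le_refl _⟩]
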